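/- (Separation of residues) Let R be a field with q ≠ 0, l the smallest positive integer with 1 + q + ⋯ + q^{l-1} = 0 (l ≤ r), and suppose f_{m,r} = Π_{1≤i<j≤m} Π_{k=1-r}^{r-1} (u_i q^k - u_j) ≠ 0. If n = (i,j)_k and n' = (i',j')_{k'} are nodes of the Young diagram of an m-partition λ of r with equal residues res(n) = q^{j-i}u_k and res(n') = q^{j'-i'}u_{k'} (in the case q ≠ 1), then k = k', i.e. the two nodes lie in the same component λ^(k). -/

import Mathlib

noncomputable section
open scoped Classical
open Finset

def conjP (l : List ℕ) : List ℕ :=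
  (List.range (l.foldr max 0)).map (fun i => l.countP (fun p => decide (i < p)))

def IsPartition (l : List ℕ) : Prop :=
  l.Pairwise (· ≥ ·) ∧ ∀ p ∈ l, 0 < p

/-- The `i`-th part (0-indexed row `i` of component `k`) of a multipartition. -/
def part (L : List (List ℕ)) (k i : ℕ) : ℕ := (L.getD k []).getD i 0

/-- `(k,i,j)` (all 0-indexed) is a node of the Young diagram of `L`. -/
def mpMem (L : List (List ℕ)) (p : ℕ × ℕ × ℕ) : Prop :=
  p.2.2 < part L p.1 p.2.1

/-- The residue `q^{j-i} u_k` of the node `(k,i,j)` (0-indexed `k`, so the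
parameter is `u (k+1)`); for nodes the difference `j - i` is unchanged by the
0-indexing shift. -/
def resN {R : Type} [Field R] (q : R) (u : ℕ → R) (p : ℕ × ℕ × ℕ) : R :=
  q ^ ((p.2.2 : ℤ) - (p.2.1 : ℤ)) * u (p.1 + 1)

/-- `f_{m,r} = Π_{1 ≤ i < j ≤ m} Π_{k=1-r}^{r-1} (u_i q^k - u_j)`. -/
def fProd {R : Type} [Field R] (q : R) (u : ℕ → R) (m r : ℕ) : R :=
  ∏ p ∈ (Finset.Icc 1 m ×ˢ Finset.Icc 1 m).filter (fun p => p.1 < p.2),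
    ∏ k ∈ Finset.Icc (1 - (r : ℤ)) ((r : ℤ) - 1), (u p.1 * q ^ k - u p.2)


lemma row_bound (x : List ℕ) (hpos : ∀ p ∈ x, 0 < p)
    (i j : ℕ) (h : j < x.getD i 0) : i + j + 1 ≤ x.sum := by
  have hi : i < x.length := by
    by_contra hh
    rw [List.getD_eq_default _ _ (le_of_not_gt hh)] at h
    omega
  have hget : x.getD i 0 = x.get ⟨i, hi⟩ := List.getD_eq_getElem _ _ hi
  have hsplit : x.sum = (x.take (i+1)).sum + (x.drop (i+1)).sum := by
    rw [← List.sum_append, List.take_append_drop]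
  have htake : x.take (i+1) = x.take i ++ [x.get ⟨i, hi⟩] := by
    simpa using List.take_concat_get x i hi
  have hlen : (x.take i).length = i := List.length_take_of_le (by omega)
  have hmin : i ≤ (x.take i).sum := by
    have := List.card_nsmul_le_sum (x.take i) 1 (fun y hy => hpos y (List.mem_of_mem_take hy))
    simpa [hlen] using this
  have : i + (j + 1) ≤ (x.take (i+1)).sum := by
    rw [htake, List.sum_append]
    simp only [List.sum_cons, List.sum_nil]
    have : j + 1 ≤ x.get ⟨i, hi⟩ := by omega
    omega
  omega

lemma two_entries (l : List ℕ) (a b : ℕ) (hab : a < b) (hb : b < l.length) :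
    l.getD a 0 + l.getD b 0 ≤ l.sum := by
  have ha : a < l.length := lt_trans hab hb
  have hsplit : l.sum = (l.take (a+1)).sum + (l.drop (a+1)).sum := by
    rw [← List.sum_append, List.take_append_drop]
  have h1 : l.getD a 0 ≤ (l.take (a+1)).sum := by
    apply List.le_sum_of_mem
    rw [List.getD_eq_getElem _ _ ha, List.mem_take_iff_getElem]
    refine ⟨a, by omega, ?_⟩
    rfl
  have h2 : l.getD b 0 ≤ (l.drop (a+1)).sum := by
    apply List.le_sum_of_mem
    rw [List.getD_eq_getElem _ _ hb]
    have hlb : b - (a+1) < (l.drop (a+1)).length := by rw [List.length_drop]; omega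
    have heq : l[b] = (l.drop (a+1))[b - (a+1)] := by
      rw [List.getElem_drop]
      congr 1
      omega
    rw [heq]
    exact List.getElem_mem _
  omega

lemma keylem (R : Type) [Field R] (q : R) (hq0 : q ≠ 0)
    (u : ℕ → R) (m r : ℕ)
    (hf : fProd q u m r ≠ 0)
    (Lp : List (List ℕ)) (hparts : ∀ x ∈ Lp, IsPartition x)
    (hlen : Lp.length = m) (hsum : Lp.flatten.sum = r)
    (p p' : ℕ × ℕ × ℕ) (hp : mpMem Lp p) (hp' : mpMem Lp p')
    (hres : resN q u p = resN q u p') (hlt : p.1 < p'.1) : False := by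
  have hk' : p'.1 < Lp.length := by
    by_contra hh
    have : Lp.getD p'.1 [] = [] := List.getD_eq_default _ _ (le_of_not_gt hh)
    simp only [mpMem, part, this] at hp'
    simp at hp'
  have hk : p.1 < Lp.length := lt_trans hlt hk'
  have hmemk : Lp.getD p.1 [] ∈ Lp := by
    rw [List.getD_eq_getElem _ _ hk]; exact List.getElem_mem _
  have hmemk' : Lp.getD p'.1 [] ∈ Lp := by
    rw [List.getD_eq_getElem _ _ hk']; exact List.getElem_mem _
  obtain ⟨hs1, hp1⟩ := hparts _ hmemk
  obtain ⟨hs1', hp1'⟩ := hparts _ hmemk'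
  have hb1 : p.2.1 + p.2.2 + 1 ≤ (Lp.getD p.1 []).sum :=
    row_bound _ hp1 _ _ hp
  have hb2 : p'.2.1 + p'.2.2 + 1 ≤ (Lp.getD p'.1 []).sum :=
    row_bound _ hp1' _ _ hp'
  have hmap : ∀ a, a < Lp.length → (Lp.map List.sum).getD a 0 = (Lp.getD a []).sum := by
    intro a ha
    rw [List.getD_eq_getElem _ _ (by simpa using ha), List.getD_eq_getElem _ _ ha,
      List.getElem_map]
  have htwo : (Lp.getD p.1 []).sum + (Lp.getD p'.1 []).sum ≤ r := by
    have h2 := two_entries (Lp.map List.sum) p.1 p'.1 hlt (by simpa using hk')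
    rw [hmap _ hk, hmap _ hk'] at h2
    calc _ ≤ (Lp.map List.sum).sum := h2
    _ = Lp.flatten.sum := List.sum_flatten.symm
    _ = r := hsum
  set d : ℤ := ((p.2.2 : ℤ) - p.2.1) - ((p'.2.2 : ℤ) - p'.2.1) with hd
  have hdmem : d ∈ Finset.Icc (1 - (r : ℤ)) ((r : ℤ) - 1) := by
    rw [Finset.mem_Icc]
    constructor <;> (rw [hd]; push_cast; omega)
  have hpair : ((p.1 + 1, p'.1 + 1) : ℕ × ℕ) ∈
      (Finset.Icc 1 m ×ˢ Finset.Icc 1 m).filter (fun x => x.1 < x.2) := by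
    simp only [Finset.mem_filter, Finset.mem_product, Finset.mem_Icc]
    omega
  rw [fProd, Finset.prod_ne_zero_iff] at hf
  have hfac := (Finset.prod_ne_zero_iff.mp (hf _ hpair)) d hdmem
  apply hfac
  have h := hres
  simp only [resN] at h
  rw [hd, zpow_sub₀ hq0]
  have hz : q ^ ((p'.2.2:ℤ) - p'.2.1) ≠ 0 := zpow_ne_zero _ hq0
  field_simp
  linear_combination h

/-- separation of residues, (4.6) first part: if `f_{m,r} ≠ 0`,
two nodes of the Young diagram of an `m`-partition of `r` with equal residues
lie in the same component. -/
theorem stmt17 (R : Type) [Field R] (q : R) (hq0 : q ≠ 0) (hq1 : q ≠ 1)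
    (u : ℕ → R) (m r : ℕ)
    (l : ℕ) (hl : 0 < l) (hlr : l ≤ r)
    (hlsum : ∑ t ∈ Finset.range l, q ^ t = 0)
    (hlmin : ∀ l', 0 < l' → l' < l → ∑ t ∈ Finset.range l', q ^ t ≠ 0)
    (hf : fProd q u m r ≠ 0)
    (Lp : List (List ℕ)) (hparts : ∀ x ∈ Lp, IsPartition x)
    (hlen : Lp.length = m) (hsum : Lp.flatten.sum = r)
    (p p' : ℕ × ℕ × ℕ) (hp : mpMem Lp p) (hp' : mpMem Lp p')
    (hres : resN q u p = resN q u p') :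
    p.1 = p'.1 := by
  rcases lt_trichotomy p.1 p'.1 with h | h | h
  · exact absurd (keylem R q hq0 u m r hf Lp hparts hlen hsum p p' hp hp' hres h) id
  · exact h
  · exact absurd (keylem R q hq0 u m r hf Lp hparts hlen hsum p' p hp' hp hres.symm h) id
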